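/- Let X ~ Bin(n,p) with μ = np. If p > 1/n, then Pr[X ≥ μ] > 1/4. -/

import Mathlib

/-- `Pr[X ≥ t]` for `X ~ Bin(n,p)`. -/
noncomputable def binomTailGE (n : ℕ) (p : ℝ) (t : ℝ) : ℝ :=
  ∑ j ∈ Finset.range (n + 1),
    if t ≤ (j : ℝ) then (n.choose j : ℝ) * p ^ j * (1 - p) ^ (n - j) else 0

open Finset

/-- The tail sum `P[Bin(n,q) ≥ k]` as an explicit polynomial. -/
noncomputable def btT (n k : ℕ) (q : ℝ) : ℝ :=
  ∑ j ∈ Finset.Ico k (n + 1), (n.choose j : ℝ) * q ^ j * (1 - q) ^ (n - j)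

/-- derivative of a single binomial term -/
lemma bt_term_hasDerivAt (n j : ℕ) (q : ℝ) :
    HasDerivAt (fun x : ℝ => (n.choose j : ℝ) * x ^ j * (1 - x) ^ (n - j))
      ((n.choose j : ℝ) * ((j : ℝ) * q ^ (j - 1)) * (1 - q) ^ (n - j)
        + (n.choose j : ℝ) * q ^ j * (((n - j : ℕ) : ℝ) * (1 - q) ^ (n - j - 1) * (-1))) q := by
  have h1 : HasDerivAt (fun x : ℝ => (n.choose j : ℝ) * x ^ j)
      ((n.choose j : ℝ) * ((j : ℝ) * q ^ (j - 1))) q := (hasDerivAt_pow j q).const_mul _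
  have h2 : HasDerivAt (fun x : ℝ => (1 - x)) (-1) q := by
    simpa using (hasDerivAt_id q).const_sub 1
  have h3 : HasDerivAt (fun x : ℝ => (1 - x) ^ (n - j))
      (((n - j : ℕ) : ℝ) * (1 - q) ^ (n - j - 1) * (-1)) q := h2.pow (n - j)
  simpa [mul_assoc, mul_comm, mul_left_comm] using h1.fun_mul h3

/-- auxiliary telescoping function -/
noncomputable def btG (n : ℕ) (q : ℝ) (j : ℕ) : ℝ :=
  (j : ℝ) * (n.choose j : ℝ) * q ^ (j - 1) * (1 - q) ^ (n - j)

lemma bt_term_eq (n j : ℕ) (hj : j ≤ n) (q : ℝ) :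
    (n.choose j : ℝ) * ((j : ℝ) * q ^ (j - 1)) * (1 - q) ^ (n - j)
        + (n.choose j : ℝ) * q ^ j * (((n - j : ℕ) : ℝ) * (1 - q) ^ (n - j - 1) * (-1))
      = btG n q j - btG n q (j + 1) := by
  have hc : ((n.choose (j+1) : ℕ) : ℝ) * ((j+1 : ℕ) : ℝ) = ((n.choose j : ℕ) : ℝ) * ((n - j : ℕ) : ℝ) := by
    rw [← Nat.cast_mul, ← Nat.cast_mul, Nat.choose_succ_right_eq]
  unfold btG
  have e1 : (j + 1 : ℕ) - 1 = j := by omega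
  have e2 : n - (j + 1) = n - j - 1 := by omega
  rw [e1, e2]
  push_cast at hc ⊢
  linear_combination (q ^ j * (1 - q) ^ (n - j - 1)) * hc

lemma btT_hasDerivAt (n k : ℕ) (hkn : k ≤ n) (q : ℝ) :
    HasDerivAt (fun x => btT n k x)
      ((k : ℝ) * (n.choose k : ℝ) * q ^ (k - 1) * (1 - q) ^ (n - k)) q := by
  have hsum : HasDerivAt (fun x => btT n k x)
      (∑ j ∈ Finset.Ico k (n + 1), (btG n q j - btG n q (j + 1))) q := by
    unfold btT
    refine HasDerivAt.fun_sum fun j hj => ?_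
    rw [← bt_term_eq n j (by simp [Finset.mem_Ico] at hj; omega) q]
    exact bt_term_hasDerivAt n j q
  have htel : ∑ j ∈ Finset.Ico k (n + 1), (btG n q j - btG n q (j + 1))
      = btG n q k - btG n q (n + 1) := by
    rw [Finset.sum_Ico_eq_sum_range]
    have h2 : ∀ i, btG n q (k + i) - btG n q (k + i + 1)
        = (fun i => btG n q (k + i)) i - (fun i => btG n q (k + i)) (i + 1) := by
      intro i; simp [Nat.add_assoc]
    calc ∑ i ∈ Finset.range (n + 1 - k), (btG n q (k + i) - btG n q (k + i + 1))
        = ∑ i ∈ Finset.range (n + 1 - k),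
            ((fun i => btG n q (k + i)) i - (fun i => btG n q (k + i)) (i + 1)) := by
          exact Finset.sum_congr rfl fun i _ => h2 i
      _ = btG n q (k + 0) - btG n q (k + (n + 1 - k)) := Finset.sum_range_sub' _ _
      _ = btG n q k - btG n q (n + 1) := by rw [Nat.add_zero]; congr 2; omega
  have hzero : btG n q (n + 1) = 0 := by
    unfold btG
    simp [Nat.choose_succ_self]
  rw [htel, hzero, sub_zero] at hsum
  unfold btG at hsum
  exact hsum

lemma btT_strictMonoOn (n k : ℕ) (hk : 1 ≤ k) (hkn : k ≤ n) :
    StrictMonoOn (btT n k) (Set.Icc (0:ℝ) 1) := by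
  apply strictMonoOn_of_deriv_pos (convex_Icc 0 1)
  · exact fun x _ => (btT_hasDerivAt n k hkn x).continuousAt.continuousWithinAt
  · intro x hx
    rw [interior_Icc, Set.mem_Ioo] at hx
    rw [(btT_hasDerivAt n k hkn x).deriv]
    have h1 : (0:ℝ) < (k : ℝ) := by exact_mod_cast hk
    have h2 : (0:ℝ) < (n.choose k : ℝ) := by exact_mod_cast Nat.choose_pos hkn
    have h3 : (0:ℝ) < x ^ (k - 1) := pow_pos hx.1 _
    have h4 : (0:ℝ) < (1 - x) ^ (n - k) := pow_pos (by linarith [hx.2]) _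
    positivity

lemma btT_split (n m : ℕ) (hmn : m ≤ n) (q : ℝ) :
    btT n m q = (n.choose m : ℝ) * q ^ m * (1 - q) ^ (n - m) + btT n (m + 1) q := by
  unfold btT
  exact Finset.sum_eq_sum_Ico_succ_bot (by omega) _

lemma btT_pascal (n m : ℕ) (hmn : m ≤ n) (q : ℝ) :
    btT (n+1) (m+1) q = q * btT n m q + (1 - q) * btT n (m+1) q := by
  unfold btT
  rw [Finset.sum_Ico_eq_sum_range, Finset.sum_Ico_eq_sum_range, Finset.sum_Ico_eq_sum_range]
  have e1 : n + 1 + 1 - (m + 1) = (n - m) + 1 := by omega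
  have e2 : n + 1 - m = (n - m) + 1 := by omega
  have e3 : n + 1 - (m + 1) = n - m := by omega
  rw [e1, e2, e3]
  have hsplit : ∀ i ∈ Finset.range ((n - m) + 1),
      ((n+1).choose (m+1+i) : ℝ) * q ^ (m+1+i) * (1 - q) ^ (n+1 - (m+1+i))
      = q * ((n.choose (m+i) : ℝ) * q ^ (m+i) * (1 - q) ^ (n - (m+i)))
        + (n.choose (m+1+i) : ℝ) * q ^ (m+1+i) * (1 - q) ^ (n+1 - (m+1+i)) := by
    intro i _
    have hch : (n+1).choose (m+1+i) = n.choose (m+i) + n.choose (m+i+1) := by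
      have : m + 1 + i = (m + i) + 1 := by omega
      rw [this]; exact Nat.choose_succ_succ n (m+i)
    have hq : q ^ (m+1+i) = q ^ (m+i) * q := by
      rw [← pow_succ]; congr 1; omega
    have he : n + 1 - (m+1+i) = n - (m+i) := by omega
    have hi : m + i + 1 = m + 1 + i := by omega
    rw [hch, hq, he, hi]
    push_cast
    ring
  rw [Finset.sum_congr rfl hsplit, Finset.sum_add_distrib, ← Finset.mul_sum]
  congr 1
  -- second part
  rw [Finset.sum_range_succ]
  have hlast : (n.choose (m+1+(n-m)) : ℝ) = 0 := by
    have : m + 1 + (n - m) = n + 1 := by omega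
    rw [this]; simp [Nat.choose_succ_self]
  rw [hlast]
  have hterm : ∀ i ∈ Finset.range (n - m),
      (n.choose (m+1+i) : ℝ) * q ^ (m+1+i) * (1 - q) ^ (n+1 - (m+1+i))
      = (1 - q) * ((n.choose (m+1+i) : ℝ) * q ^ (m+1+i) * (1 - q) ^ (n - (m+1+i))) := by
    intro i hi
    rw [Finset.mem_range] at hi
    have he : n + 1 - (m+1+i) = (n - (m+1+i)) + 1 := by omega
    rw [he, pow_succ]
    ring
  rw [Finset.sum_congr rfl hterm, ← Finset.mul_sum]
  ring

lemma btT_succ (n m : ℕ) (hmn : m ≤ n) (q : ℝ) :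
    btT (n+1) (m+1) q
      = q * ((n.choose m : ℝ) * q ^ m * (1 - q) ^ (n - m)) + btT n (m+1) q := by
  rw [btT_pascal n m hmn q, btT_split n m hmn q]
  ring

lemma btT_mono_step (n m : ℕ) (hm : 1 ≤ m) (hmn : m < n) :
    btT n (m+1) ((m:ℝ)/n) ≤ btT (n+1) (m+1) ((m:ℝ)/(n+1)) := by
  have hn0 : (0:ℝ) < n := by
    have : 0 < n := by omega
    exact_mod_cast this
  have hm0 : (0:ℝ) < m := by exact_mod_cast hm
  set F : ℝ → ℝ := fun q =>
    ((m:ℝ) - n*q) * ((n.choose m : ℝ) * q^m * (1-q)^(n-m)) + btT n (m+1) q with hFdef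
  have hF : ∀ q : ℝ, HasDerivAt F
      ((n.choose m : ℝ) * q^(m-1) * (1-q)^(n-m-1)
        * (((n:ℝ)*q - m) * (((n:ℝ)+1)*q - m))) q := by
    intro q
    have hlin : HasDerivAt (fun q : ℝ => (m:ℝ) - (n:ℝ)*q) (-(n:ℝ)) q := by
      simpa using (((hasDerivAt_id q).const_mul (n:ℝ)).const_sub (m:ℝ))
    have hb := bt_term_hasDerivAt n m q
    have hT := btT_hasDerivAt n (m+1) (by omega) q
    have htotal := (hlin.fun_mul hb).fun_add hT
    refine htotal.congr_deriv (Eq.symm ?_)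
    have hq : q^m = q^(m-1)*q := by rw [← pow_succ]; congr 1; omega
    have h1q : (1-q)^(n-m) = (1-q)^(n-m-1)*(1-q) := by rw [← pow_succ]; congr 1; omega
    have hexp1 : (m+1) - 1 = m := by omega
    have hexp2 : n - (m+1) = n - m - 1 := by omega
    have hcc : ((m:ℝ)+1) * (n.choose (m+1):ℝ) = ((n:ℝ) - m) * (n.choose m : ℝ) := by
      have h := Nat.choose_succ_right_eq n m
      have h2 := congrArg (fun t : ℕ => (t:ℝ)) h
      push_cast [Nat.cast_sub hmn.le] at h2
      linarith
    have hnm : ((n - m : ℕ) : ℝ) = (n:ℝ) - m := Nat.cast_sub hmn.le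
    rw [hexp1, hexp2, hnm]
    push_cast
    rw [hq, h1q]
    linear_combination (-(q ^ (m-1) * q * (1 - q) ^ (n - m - 1))) * hcc
  have hlt : (m:ℝ)/(n+1) < (m:ℝ)/n := by
    apply div_lt_div_of_pos_left hm0 hn0
    linarith
  have hanti : AntitoneOn F (Set.Icc ((m:ℝ)/(n+1)) ((m:ℝ)/n)) := by
    apply antitoneOn_of_deriv_nonpos (convex_Icc _ _)
    · exact fun x _ => (hF x).continuousAt.continuousWithinAt
    · intro x hx
      exact (hF x).differentiableAt.differentiableWithinAt
    · intro x hx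
      rw [interior_Icc, Set.mem_Ioo] at hx
      rw [(hF x).deriv]
      have hx0 : 0 < x := lt_trans (div_pos hm0 (by linarith)) hx.1
      have hx1 : x < 1 := by
        have h1 : (m:ℝ)/n ≤ 1 := by
          rw [div_le_one hn0]; exact_mod_cast hmn.le
        linarith [hx.2]
      have hA : 0 ≤ (n.choose m : ℝ) * x^(m-1) * (1-x)^(n-m-1) :=
        mul_nonneg (mul_nonneg (Nat.cast_nonneg _) (pow_nonneg hx0.le _))
          (pow_nonneg (by linarith : (0:ℝ) ≤ 1 - x) _)
      have hB1 : (n:ℝ)*x - m ≤ 0 := by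
        have := hx.2
        rw [lt_div_iff₀ hn0] at this
        nlinarith
      have hB2 : 0 ≤ ((n:ℝ)+1)*x - m := by
        have := hx.1
        rw [div_lt_iff₀ (by linarith : (0:ℝ) < (n:ℝ)+1)] at this
        nlinarith
      have hB : ((n:ℝ)*x - m) * (((n:ℝ)+1)*x - m) ≤ 0 :=
        mul_nonpos_of_nonpos_of_nonneg hB1 hB2
      exact mul_nonpos_of_nonneg_of_nonpos hA hB
  have hmem1 : (m:ℝ)/(n+1) ∈ Set.Icc ((m:ℝ)/(n+1)) ((m:ℝ)/n) :=
    Set.left_mem_Icc.mpr hlt.le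
  have hmem2 : (m:ℝ)/n ∈ Set.Icc ((m:ℝ)/(n+1)) ((m:ℝ)/n) :=
    Set.right_mem_Icc.mpr hlt.le
  have hkey := hanti hmem1 hmem2 hlt.le
  have hF2 : F ((m:ℝ)/n) = btT n (m+1) ((m:ℝ)/n) := by
    simp only [hFdef]
    have : (m:ℝ) - n * ((m:ℝ)/n) = 0 := by field_simp; ring
    rw [this]; ring
  have hF1 : F ((m:ℝ)/(n+1)) = btT (n+1) (m+1) ((m:ℝ)/(n+1)) := by
    simp only [hFdef]
    rw [btT_succ n m hmn.le ((m:ℝ)/(n+1))]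
    have : (m:ℝ) - n * ((m:ℝ)/(n+1)) = (m:ℝ)/(n+1) := by
      field_simp; ring
    rw [this]
  rw [hF2, hF1] at hkey
  exact hkey

lemma btT_base (m : ℕ) : btT (m+1) (m+1) ((m:ℝ)/((m:ℝ)+1)) = ((m:ℝ)/((m:ℝ)+1))^(m+1) := by
  unfold btT
  rw [Finset.sum_Ico_eq_sum_range]
  have e : m + 1 + 1 - (m+1) = 1 := by omega
  rw [e, Finset.sum_range_one]
  norm_num [Nat.choose_self]

lemma btT_ge_diag (m : ℕ) (hm : 1 ≤ m) :
    ∀ n, m < n → ((m:ℝ)/((m:ℝ)+1))^(m+1) ≤ btT n (m+1) ((m:ℝ)/(n:ℝ)) := by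
  have H : ∀ n, m + 1 ≤ n → ((m:ℝ)/((m:ℝ)+1))^(m+1) ≤ btT n (m+1) ((m:ℝ)/(n:ℝ)) := by
    refine Nat.le_induction ?_ ?_
    · have : ((m+1 : ℕ) : ℝ) = (m:ℝ) + 1 := by push_cast; ring
      rw [this, btT_base m]
    · intro n hn ih
      have hstep := btT_mono_step n m hm (by omega)
      have : ((n+1 : ℕ) : ℝ) = (n:ℝ) + 1 := by push_cast; ring
      rw [this]
      exact le_trans ih hstep
  intro n hn
  exact H n (by omega)

lemma pow_quarter (m : ℕ) (hm : 1 ≤ m) : (1/4 : ℝ) ≤ ((m:ℝ)/((m:ℝ)+1))^(m+1) := by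
  induction m with
  | zero => omega
  | succ l ih =>
    by_cases hl : l = 0
    · subst hl; norm_num
    have hl1 : 1 ≤ l := by omega
    have key := ih hl1
    refine le_trans key ?_
    -- show ((l:ℝ)/(l+1))^(l+1) ≤ (((l+1):ℝ)/((l+1)+1))^(l+2)
    have hM : (1:ℝ) ≤ (l:ℝ) := by exact_mod_cast hl1
    set M : ℝ := (l:ℝ) with hMdef
    have hM0 : 0 < M := by linarith
    have hM1 : 0 < M + 1 := by linarith
    have hM2 : 0 < M + 2 := by linarith
    set X : ℝ := 1/(M*(M+2)) with hXdef
    have hX0 : 0 ≤ X := by positivity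
    have hXeq : X * (M*(M+2)) = 1 := by
      rw [hXdef]; field_simp
    have hBer : 1 + ((l+1 : ℕ):ℝ) * X ≤ (1 + X)^(l+1) :=
      one_add_mul_le_pow (by linarith) (l+1)
    have h1 : (M+2)/(M+1) ≤ 1 + ((l+1 : ℕ):ℝ) * X := by
      rw [div_le_iff₀ hM1]
      push_cast
      nlinarith [hXeq, hX0]
    have h2 : (M+2)/(M+1) ≤ (1 + X)^(l+1) := le_trans h1 hBer
    have hfac : ((M+1)/(M+2)) = (M/(M+1)) * (1+X) := by
      rw [hXdef]; field_simp; ring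
    have hone : ((M+2)/(M+1)) * ((M+1)/(M+2)) = 1 := by
      field_simp
    have hbase : (0:ℝ) ≤ M/(M+1) := by positivity
    have hbasepow : (0:ℝ) ≤ (M/(M+1))^(l+1) := by positivity
    have step : (M/(M+1))^(l+1) ≤ ((M+1)/(M+2))^(l+2) := by
      calc (M/(M+1))^(l+1) = (M/(M+1))^(l+1) * (((M+2)/(M+1)) * ((M+1)/(M+2))) := by
            rw [hone, mul_one]
        _ ≤ (M/(M+1))^(l+1) * ((1 + X)^(l+1) * ((M+1)/(M+2))) := by
            apply mul_le_mul_of_nonneg_left _ hbasepow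
            apply mul_le_mul_of_nonneg_right h2 (by positivity)
        _ = ((M/(M+1)) * (1+X))^(l+1) * ((M+1)/(M+2)) := by
            rw [mul_pow]; ring
        _ = ((M+1)/(M+2))^(l+1) * ((M+1)/(M+2)) := by rw [← hfac]
        _ = ((M+1)/(M+2))^(l+2) := by rw [← pow_succ]
    have hcast : ((l+1 : ℕ):ℝ) = M + 1 := by push_cast; ring
    rw [hcast]
    have : (M + 1 + 1) = M + 2 := by ring
    rw [this]
    exact step


/-- A binomial random variable exceeds its mean with probability greater
than `1/4` whenever `p > 1/n`. -/
theorem binomial_exceeds_mean (n : ℕ) (p : ℝ) (hp1 : p ≤ 1)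
    (hp : 1 / (n : ℝ) < p) :
    binomTailGE n p ((n : ℝ) * p) > 1 / 4 := by
  by_cases hn : n = 0
  · subst hn
    unfold binomTailGE
    rw [Finset.sum_range_one]
    norm_num
  have hn1 : 1 ≤ n := Nat.one_le_iff_ne_zero.mpr hn
  have hn0 : (0:ℝ) < n := by exact_mod_cast hn1
  have hp0 : 0 < p := lt_of_le_of_lt (by positivity) hp
  have hnp1 : (1:ℝ) < (n:ℝ) * p := by
    rw [div_lt_iff₀ hn0] at hp
    linarith
  set k := ⌈(n:ℝ) * p⌉₊ with hk
  have hk2 : 2 ≤ k := by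
    have h1 : 1 < k := by
      rw [hk, Nat.lt_ceil]
      exact_mod_cast hnp1
    omega
  have hkn : k ≤ n := by
    rw [hk]
    apply Nat.ceil_le.mpr
    nlinarith
  set m := k - 1 with hm
  have hm1 : 1 ≤ m := by omega
  have hmn : m < n := by omega
  have hkm : k = m + 1 := by omega
  have hcast : ((m:ℕ):ℝ) = (k:ℝ) - 1 := by
    rw [hm]
    push_cast [Nat.cast_sub (by omega : 1 ≤ k)]
    ring
  have hmp : (m:ℝ)/(n:ℝ) < p := by
    rw [div_lt_iff₀ hn0]
    have hceil : ((k:ℕ):ℝ) < (n:ℝ)*p + 1 := Nat.ceil_lt_add_one (by positivity)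
    rw [hcast]
    nlinarith
  have heq : binomTailGE n p ((n:ℝ)*p) = btT n k p := by
    unfold binomTailGE btT
    rw [← Finset.sum_filter]
    congr 1
    ext j
    simp only [Finset.mem_filter, Finset.mem_Ico, Finset.mem_range]
    constructor
    · rintro ⟨h1, h2⟩
      exact ⟨Nat.ceil_le.mpr h2, h1⟩
    · rintro ⟨h1, h2⟩
      exact ⟨h2, le_trans (Nat.le_ceil _) (by exact_mod_cast h1)⟩
  have hmono := btT_strictMonoOn n k (by omega) hkn
  have hmem1 : (m:ℝ)/(n:ℝ) ∈ Set.Icc (0:ℝ) 1 := by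
    constructor
    · positivity
    · rw [div_le_one hn0]; exact_mod_cast hmn.le
  have hmem2 : p ∈ Set.Icc (0:ℝ) 1 := ⟨hp0.le, hp1⟩
  have hlt : btT n k ((m:ℝ)/(n:ℝ)) < btT n k p := hmono hmem1 hmem2 hmp
  have hge := btT_ge_diag m hm1 n hmn
  have hq := pow_quarter m hm1
  rw [heq]
  rw [hkm] at hlt ⊢
  calc (1/4 : ℝ) ≤ ((m:ℝ)/((m:ℝ)+1))^(m+1) := hq
    _ ≤ btT n (m+1) ((m:ℝ)/(n:ℝ)) := hge
    _ < btT n (m+1) p := hlt
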